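/- Every mutation-cyclic triple reaches a root by iterated mutation at the vertex opposite the maximal entry: if (a,b,c) with 2 ≤ a ≤ b ≤ c is mutation-cyclic, then the sequence of triples obtained by repeatedly replacing the maximal entry c' of the current ordered triple (a',b',c') with a'b' − c' (and reordering) eventually reaches a triple (x,y,z) with x ≤ y ≤ z and xy ≥ 2z, and this procedure terminates in finitely many steps. -/

import Mathlib

/-- One mutation step on a triple of integers: replace one entry `x` by
(product of the other two) − `x`. -/
def mutStep (t s : ℤ × ℤ × ℤ) : Prop :=
  s = (t.1, t.2.1, t.1 * t.2.1 - t.2.2) ∨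
  s = (t.1, t.1 * t.2.2 - t.2.1, t.2.2) ∨
  s = (t.2.1 * t.2.2 - t.1, t.2.1, t.2.2)

/-- A triple is mutation-acyclic if some finite sequence of mutations
reaches a triple with a nonpositive entry (an acyclic quiver). -/
def MutationAcyclic (t : ℤ × ℤ × ℤ) : Prop :=
  ∃ s, Relation.ReflTransGen mutStep t s ∧ (s.1 ≤ 0 ∨ s.2.1 ≤ 0 ∨ s.2.2 ≤ 0)

/-- A triple is mutation-cyclic if every quiver in its mutation class is cyclic. -/
def MutationCyclic (t : ℤ × ℤ × ℤ) : Prop := ¬ MutationAcyclic t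

/-- Mutation of an ordered triple at the vertex opposite the maximal entry,
reordering the result increasingly. -/
def muMax (t : ℤ × ℤ × ℤ) : ℤ × ℤ × ℤ :=
  let d := t.1 * t.2.1 - t.2.2
  if d ≤ t.1 then (d, t.1, t.2.1)
  else if d ≤ t.2.1 then (t.1, d, t.2.1)
  else (t.1, t.2.1, d)

def sw12 (t : ℤ × ℤ × ℤ) : ℤ × ℤ × ℤ := (t.2.1, t.1, t.2.2)
def sw23 (t : ℤ × ℤ × ℤ) : ℤ × ℤ × ℤ := (t.1, t.2.2, t.2.1)

lemma mutStep_sw12 {t s : ℤ × ℤ × ℤ} (h : mutStep t s) : mutStep (sw12 t) (sw12 s) := by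
  obtain ⟨t1, t2, t3⟩ := t
  rcases h with h | h | h <;> subst h
  · left; simp [sw12, Prod.ext_iff]; ring
  · right; right; simp [sw12, Prod.ext_iff]
  · right; left; simp [sw12, Prod.ext_iff]

lemma mutStep_sw23 {t s : ℤ × ℤ × ℤ} (h : mutStep t s) : mutStep (sw23 t) (sw23 s) := by
  obtain ⟨t1, t2, t3⟩ := t
  rcases h with h | h | h <;> subst h
  · right; left; simp [sw23, Prod.ext_iff]
  · left; simp [sw23, Prod.ext_iff]
  · right; right; simp [sw23, Prod.ext_iff]; ring

lemma acyclic_sw12 {t : ℤ × ℤ × ℤ} (h : MutationAcyclic t) : MutationAcyclic (sw12 t) := by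
  obtain ⟨s, hs, hne⟩ := h
  exact ⟨sw12 s, Relation.ReflTransGen.lift sw12 (fun _ _ => mutStep_sw12) _ _ hs, by
    simp only [sw12]; tauto⟩

lemma acyclic_sw23 {t : ℤ × ℤ × ℤ} (h : MutationAcyclic t) : MutationAcyclic (sw23 t) := by
  obtain ⟨s, hs, hne⟩ := h
  exact ⟨sw23 s, Relation.ReflTransGen.lift sw23 (fun _ _ => mutStep_sw23) _ _ hs, by
    simp only [sw23]; tauto⟩

lemma acyclic_of_step {t s : ℤ × ℤ × ℤ} (h : mutStep t s) (hs : MutationAcyclic s) :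
    MutationAcyclic t := by
  obtain ⟨u, hu, hne⟩ := hs
  exact ⟨u, Relation.ReflTransGen.head h hu, hne⟩

/-- Key step: if a sorted cyclic triple with entries ≥ 2 is not a root,
then `muMax` gives another sorted cyclic triple with entries ≥ 2 and smaller sum. -/
lemma key_step (a b c : ℤ) (ha : 2 ≤ a) (hab : a ≤ b) (hbc : b ≤ c)
    (hcyc : MutationCyclic (a, b, c)) (hnr : a * b < 2 * c) :
    2 ≤ (muMax (a,b,c)).1 ∧ (muMax (a,b,c)).1 ≤ (muMax (a,b,c)).2.1 ∧
    (muMax (a,b,c)).2.1 ≤ (muMax (a,b,c)).2.2 ∧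
    (muMax (a,b,c)).1 + (muMax (a,b,c)).2.1 + (muMax (a,b,c)).2.2 = a + b + (a*b - c) ∧
    MutationCyclic (muMax (a,b,c)) := by
  set d := a * b - c with hd
  have hstep1 : mutStep (a, b, c) (a, b, d) := by left; simp [hd]
  -- d ≥ 2
  have hd2 : 2 ≤ d := by
    by_contra hlt
    push_neg at hlt
    have hd1 : d ≤ 1 := by omega
    apply hcyc
    apply acyclic_of_step hstep1
    refine ⟨(a, a * d - b, d), Relation.ReflTransGen.single ?_, ?_⟩
    · right; left; rfl
    · right; left
      simp only
      nlinarith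
  have hdc : d < c := by omega
  have hcyc' : MutationCyclic (a, b, d) := fun h => hcyc (acyclic_of_step hstep1 h)
  have habd : MutationCyclic (a, d, b) := by
    intro h
    exact hcyc' (acyclic_sw23 (t := (a, d, b)) h)
  have hdab : MutationCyclic (d, a, b) := by
    intro h
    have h2 : MutationAcyclic (a, d, b) := acyclic_sw12 (t := (d, a, b)) h
    exact habd h2
  unfold muMax
  simp only [hd.symm]
  by_cases h1 : d ≤ a
  · rw [if_pos h1]
    refine ⟨hd2, h1, hab, by ring, hdab⟩
  · rw [if_neg h1]
    by_cases h2 : d ≤ b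
    · rw [if_pos h2]
      dsimp only
      refine ⟨by omega, by omega, h2, by ring, habd⟩
    · rw [if_neg h2]
      dsimp only
      refine ⟨by omega, by omega, by omega, by ring, hcyc'⟩

lemma main (N : ℕ) : ∀ a b c : ℤ, 2 ≤ a → a ≤ b → b ≤ c → MutationCyclic (a, b, c) →
    (a + b + c).toNat ≤ N →
    ∃ n : ℕ, (muMax^[n] (a, b, c)).1 ≤ (muMax^[n] (a, b, c)).2.1 ∧
      (muMax^[n] (a, b, c)).2.1 ≤ (muMax^[n] (a, b, c)).2.2 ∧
      (muMax^[n] (a, b, c)).1 * (muMax^[n] (a, b, c)).2.1 ≥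
        2 * (muMax^[n] (a, b, c)).2.2 := by
  induction N with
  | zero => intro a b c ha hab hbc _ hN; omega
  | succ N ih =>
    intro a b c ha hab hbc hcyc hN
    by_cases hroot : a * b ≥ 2 * c
    · exact ⟨0, by simpa using ⟨hab, hbc, hroot⟩⟩
    · push_neg at hroot
      obtain ⟨h2, h12, h23, hsum, hcyc'⟩ := key_step a b c ha hab hbc hcyc hroot
      set u := muMax (a, b, c) with hu
      have huu : u = (u.1, u.2.1, u.2.2) := rfl
      have hN' : (u.1 + u.2.1 + u.2.2).toNat ≤ N := by omega
      obtain ⟨n, hn⟩ := ih u.1 u.2.1 u.2.2 h2 h12 h23 (by rwa [← huu]) hN'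
      rw [← huu] at hn
      refine ⟨n + 1, ?_⟩
      rw [Function.iterate_succ_apply]
      exact hn

theorem stmt_17 (a b c : ℤ) (ha : 2 ≤ a) (hab : a ≤ b) (hbc : b ≤ c)
    (hcyc : MutationCyclic (a, b, c)) :
    ∃ n : ℕ, (muMax^[n] (a, b, c)).1 ≤ (muMax^[n] (a, b, c)).2.1 ∧
      (muMax^[n] (a, b, c)).2.1 ≤ (muMax^[n] (a, b, c)).2.2 ∧
      (muMax^[n] (a, b, c)).1 * (muMax^[n] (a, b, c)).2.1 ≥
        2 * (muMax^[n] (a, b, c)).2.2 := by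
  exact main (a + b + c).toNat a b c ha hab hbc hcyc le_rfl
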